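/- Let P be a poset with an antitone involution ' and for A ⊆ P set A* := L(A') where A' := {x' | x ∈ A}. Then for all subsets A, B ⊆ P with L(U(A)) = A and L(U(B)) = B: (i) A ⊆ B implies B* ⊆ A*, and (ii) A** = A. -/
import Mathlib

/-- For a poset with an antitone involution `n`, setting
`A* := L(n '' A)`, for closed subsets `A`, `B` (i.e. `L(U(A)) = A`): `A ⊆ B`
implies `B* ⊆ A*`, and `A** = A`. -/
theorem stmt_13 {P : Type*} [PartialOrder P] (n : P → P)
    (hanti : ∀ x y : P, x ≤ y → n y ≤ n x) (hinv : ∀ x : P, n (n x) = x) :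
    ∀ A B : Set P, lowerBounds (upperBounds A) = A →
      lowerBounds (upperBounds B) = B →
      (A ⊆ B → lowerBounds (n '' B) ⊆ lowerBounds (n '' A)) ∧
      lowerBounds (n '' lowerBounds (n '' A)) = A := by
  intro A B hA hB
  constructor
  · intro hAB x hx
    rintro z ⟨a, ha, rfl⟩
    exact hx ⟨a, hAB ha, rfl⟩
  · conv_rhs => rw [← hA]
    ext y
    constructor
    · intro hy z hz
      have hnz : n z ∈ lowerBounds (n '' A) := by
        rintro w ⟨a, ha, rfl⟩
        exact hanti _ _ (hz ha)
      have := hy ⟨n z, hnz, rfl⟩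
      rwa [hinv] at this
    · rintro hy w ⟨x, hx, rfl⟩
      have hnx : n x ∈ upperBounds A := by
        intro a ha
        have h1 := hanti _ _ (hx ⟨a, ha, rfl⟩)
        rwa [hinv] at h1
      exact hy hnx
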